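/- Both f and g are strictly monotonically decreasing on [2, ∞): for all real h, h' with 2 ≤ h < h', one has f(h') < f(h) and g(h') < g(h). -/

import Mathlib

/-- The function `f` of the paper. -/
noncomputable def fFun (h : ℝ) : ℝ :=
  (Real.logb 2 (h - 1 + Real.sqrt ((h - 1) * (h + 3))) - 1)⁻¹

/-- The function `g` of the paper. -/
noncomputable def gFun (h : ℝ) : ℝ :=
  1 + (fFun h / 2) * (Real.logb 2 (h - 1) + Real.logb 2 (h + 3))

open Real in
private lemma sqrt_gt_two (h : ℝ) (hh : 2 ≤ h) : 2 < Real.sqrt ((h - 1) * (h + 3)) := by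
  have h5 : (5:ℝ) ≤ (h-1)*(h+3) := by nlinarith
  have hs : Real.sqrt 5 ≤ Real.sqrt ((h-1)*(h+3)) := Real.sqrt_le_sqrt h5
  nlinarith [Real.sq_sqrt (show (0:ℝ) ≤ 5 by norm_num), Real.sqrt_nonneg 5]

private lemma x_gt_two (h : ℝ) (hh : 2 ≤ h) :
    2 < h - 1 + Real.sqrt ((h - 1) * (h + 3)) := by
  have := sqrt_gt_two h hh; linarith

private lemma logb_x_gt_one (h : ℝ) (hh : 2 ≤ h) :
    1 < Real.logb 2 (h - 1 + Real.sqrt ((h - 1) * (h + 3))) := by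
  have hx := x_gt_two h hh
  have : Real.logb 2 2 < Real.logb 2 (h - 1 + Real.sqrt ((h - 1) * (h + 3))) :=
    Real.logb_lt_logb one_lt_two (by norm_num) hx
  rwa [Real.logb_self_eq_one one_lt_two] at this

private lemma x_lt_x (h h' : ℝ) (hh : 2 ≤ h) (hlt : h < h') :
    h - 1 + Real.sqrt ((h - 1) * (h + 3)) < h' - 1 + Real.sqrt ((h' - 1) * (h' + 3)) := by
  have : Real.sqrt ((h - 1) * (h + 3)) ≤ Real.sqrt ((h' - 1) * (h' + 3)) :=
    Real.sqrt_le_sqrt (by nlinarith)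
  linarith

private lemma g_eq (h : ℝ) (hh : 2 ≤ h) :
    gFun h = 2 + (Real.logb 2 (h - 1 + Real.sqrt ((h - 1) * (h + 3)) + 4)
      - Real.logb 2 (h - 1 + Real.sqrt ((h - 1) * (h + 3)) + 2))
      / (Real.logb 2 (h - 1 + Real.sqrt ((h - 1) * (h + 3))) - 1) := by
  have ht2 := sqrt_gt_two h hh
  set s : ℝ := h - 1 with hs
  set t : ℝ := Real.sqrt ((h - 1) * (h + 3)) with htdef
  have hsq : t ^ 2 = (h - 1) * (h + 3) := Real.sq_sqrt (by nlinarith)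
  have hs1 : (1:ℝ) ≤ s := by simp [hs]; linarith
  have hx2 : 2 < s + t := by linarith
  -- t = (s+t)*(s+t+4) / (2*(s+t+2))
  have hkey : t = (s + t) * (s + t + 4) / (2 * (s + t + 2)) := by
    rw [eq_div_iff (by positivity)]
    have h2 : t ^ 2 = s ^ 2 + 4 * s := by rw [hsq, hs]; ring
    nlinarith [h2]
  have hL1 : 1 < Real.logb 2 (s + t) := logb_x_gt_one h hh
  have hlogt : Real.logb 2 t = Real.logb 2 (s + t) + Real.logb 2 (s + t + 4)
      - (1 + Real.logb 2 (s + t + 2)) := by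
    calc Real.logb 2 t = Real.logb 2 ((s + t) * (s + t + 4) / (2 * (s + t + 2))) := by
          rw [← hkey]
      _ = _ := by
          rw [Real.logb_div (by positivity) (by positivity),
            Real.logb_mul (by positivity) (by positivity),
            Real.logb_mul (by norm_num) (by positivity),
            Real.logb_self_eq_one one_lt_two]
  have hsum : Real.logb 2 (h - 1) + Real.logb 2 (h + 3) = 2 * Real.logb 2 t := by
    rw [← Real.logb_mul (by linarith : h - 1 ≠ 0) (by linarith : h + 3 ≠ 0), ← hsq,
      sq, Real.logb_mul (by linarith) (by linarith)]
    ring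
  have hne : Real.logb 2 (s + t) - 1 ≠ 0 := by linarith
  rw [gFun, fFun, hsum, hlogt]
  set L := Real.logb 2 (s + t) with hL
  set A := Real.logb 2 (s + t + 4) with hA
  set B := Real.logb 2 (s + t + 2) with hB
  field_simp
  ring

/-- Both `f` and `g` are strictly decreasing on `[2, ∞)`. -/
theorem fFun_gFun_strict_anti :
    ∀ h h' : ℝ, 2 ≤ h → h < h' → fFun h' < fFun h ∧ gFun h' < gFun h := by
  intro h h' hh hlt
  have hh' : 2 ≤ h' := by linarith
  have hx := x_gt_two h hh
  have hx' := x_gt_two h' hh'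
  have hxx := x_lt_x h h' hh hlt
  have hL := logb_x_gt_one h hh
  have hL' := logb_x_gt_one h' hh'
  have hLL : Real.logb 2 (h - 1 + Real.sqrt ((h - 1) * (h + 3))) <
      Real.logb 2 (h' - 1 + Real.sqrt ((h' - 1) * (h' + 3))) :=
    Real.logb_lt_logb one_lt_two (by linarith) hxx
  constructor
  · rw [fFun, fFun]
    exact inv_strictAnti₀ (by linarith) (by linarith)
  · rw [g_eq h hh, g_eq h' hh']
    set x := h - 1 + Real.sqrt ((h - 1) * (h + 3))
    set x' := h' - 1 + Real.sqrt ((h' - 1) * (h' + 3))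
    have hA : Real.logb 2 (x' + 4) - Real.logb 2 (x' + 2) <
        Real.logb 2 (x + 4) - Real.logb 2 (x + 2) := by
      have e : Real.logb 2 (x + 4) - Real.logb 2 (x + 2)
          = Real.logb 2 ((x + 4) / (x + 2)) :=
        (Real.logb_div (by linarith) (by linarith)).symm
      have e' : Real.logb 2 (x' + 4) - Real.logb 2 (x' + 2)
          = Real.logb 2 ((x' + 4) / (x' + 2)) :=
        (Real.logb_div (by linarith) (by linarith)).symm
      rw [e, e']
      apply Real.logb_lt_logb one_lt_two (by positivity)
      rw [div_lt_div_iff₀ (by linarith) (by linarith)]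
      nlinarith
    have hApos : 0 < Real.logb 2 (x' + 4) - Real.logb 2 (x' + 2) := by
      have : Real.logb 2 (x' + 2) < Real.logb 2 (x' + 4) :=
        Real.logb_lt_logb one_lt_two (by linarith) (by linarith)
      linarith
    have h1 : (Real.logb 2 (x' + 4) - Real.logb 2 (x' + 2)) / (Real.logb 2 x' - 1) <
        (Real.logb 2 (x + 4) - Real.logb 2 (x + 2)) / (Real.logb 2 x - 1) := by
      apply div_lt_div₀ hA (by linarith) (by linarith) (by linarith)
    linarith
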